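/- arXiv:1902.07941 — 2 statements merged into one kernel-verified Lean document; each statement's English description precedes it below -/
import Mathlib

section
/- Strong convexity of X ↦ Φ((λ+X)⁻¹) with respect to the harmonic mean: for a strictly positive linear map Φ between matrix algebras, λ ≥ 0, and positive definite X, Y, Φ((λ + (X+Y)/2)⁻¹) ≤ Φ((λ+X)⁻¹) ! Φ((λ+Y)⁻¹), where A ! B = ((A⁻¹+B⁻¹)/2)⁻¹. -/
open Matrix ComplexOrder

variable {m n : ℕ}

-- positivity of scalar multiples of 1
lemma smul_one_posSemidef {l : ℝ} (hl : 0 ≤ l) :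
    ((l : ℂ) • (1 : Matrix (Fin m) (Fin m) ℂ)).PosSemidef := by
  rw [smul_one_eq_diagonal]
  exact Matrix.PosSemidef.diagonal (fun i => by simp [Complex.zero_le_real, hl])

lemma smul_one_posDef {t : ℝ} (ht : 0 < t) :
    ((t : ℂ) • (1 : Matrix (Fin m) (Fin m) ℂ)).PosDef := by
  rw [smul_one_eq_diagonal]
  exact Matrix.PosDef.diagonal (fun i => by simp [Complex.zero_lt_real, ht])

lemma posMap_posSemidef (Φ : Matrix (Fin m) (Fin m) ℂ →ₗ[ℂ] Matrix (Fin n) (Fin n) ℂ)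
    (hΦ : ∀ A : Matrix (Fin m) (Fin m) ℂ, A.PosDef → (Φ A).PosDef)
    {A : Matrix (Fin m) (Fin m) ℂ} (hA : A.PosSemidef) : (Φ A).PosSemidef := by
  have hone : (1 : Matrix (Fin m) (Fin m) ℂ).PosDef := Matrix.PosDef.one
  have hherm : (Φ A).IsHermitian := by
    have h : Φ A = Φ (A + 1) - Φ 1 := by rw [map_add]; abel
    rw [h]
    exact ((hΦ _ (Matrix.PosDef.posSemidef_add hA hone)).isHermitian).sub (hΦ 1 hone).isHermitian
  refine Matrix.PosSemidef.of_dotProduct_mulVec_nonneg hherm fun x => ?_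
  rcases eq_or_ne x 0 with rfl | hx
  · simp
  · set q := star x ⬝ᵥ (Φ A *ᵥ x) with hqdef
    set p := star x ⬝ᵥ (Φ 1 *ᵥ x) with hpdef
    have key : ∀ t : ℝ, 0 < t → 0 < q + (t : ℂ) * p := by
      intro t ht
      have hpd : (Φ (A + (t : ℂ) • 1)).PosDef := hΦ _ (Matrix.PosDef.posSemidef_add hA (smul_one_posDef ht))
      have h2 := hpd.dotProduct_mulVec_pos hx
      rwa [map_add, LinearMap.map_smul, add_mulVec, smul_mulVec, dotProduct_add,
        dotProduct_smul, smul_eq_mul] at h2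
    rw [Complex.le_def]
    constructor
    · by_contra hq
      push_neg at hq
      simp only [Complex.zero_re] at hq
      simp only [Complex.lt_def, Complex.add_re, Complex.add_im, Complex.zero_re,
        Complex.zero_im, Complex.mul_re, Complex.mul_im, Complex.ofReal_re,
        Complex.ofReal_im] at key
      have k1 := (key 1 one_pos).1
      have hpre : 0 < p.re := by nlinarith
      have k2 := (key (-q.re / p.re) (div_pos (by linarith) hpre)).1
      have hc : -q.re / p.re * p.re = -q.re := div_mul_cancel₀ _ hpre.ne'
      nlinarith
    · simp only [Complex.lt_def, Complex.add_im, Complex.zero_im, Complex.mul_im,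
        Complex.ofReal_re, Complex.ofReal_im] at key
      have k1 := (key 1 one_pos).2
      have k2 := (key 2 two_pos).2
      rw [Complex.zero_im]
      nlinarith [k1, k2]

lemma vecMulVec_posSemidef (v : Fin m → ℂ) : (vecMulVec v (star v)).PosSemidef := by
  refine Matrix.PosSemidef.of_dotProduct_mulVec_nonneg ?_ ?_
  · ext i j
    simp [conjTranspose_apply, vecMulVec_apply, mul_comm]
  · intro x
    have hval : star x ⬝ᵥ (vecMulVec v (star v) *ᵥ x) =
        star (star v ⬝ᵥ x) * (star v ⬝ᵥ x) := by
      simp only [dotProduct, mulVec, vecMulVec_apply, Pi.star_apply, dotProduct]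
      simp only [Finset.mul_sum, Finset.sum_mul, star_sum, star_mul', star_star]
      rw [Finset.sum_comm]
      congr 1; ext i; congr 1; ext j; ring
    rw [hval]
    exact star_mul_self_nonneg _

lemma mul_diag_conjT (R : Matrix (Fin m) (Fin m) ℂ) (d : Fin m → ℂ) :
    R * diagonal d * Rᴴ = ∑ i, d i • vecMulVec (fun k => R k i) (star fun k => R k i) := by
  ext k l
  rw [Matrix.mul_apply]
  simp only [Matrix.mul_diagonal, conjTranspose_apply, Matrix.sum_apply, Matrix.smul_apply,
    vecMulVec_apply, Pi.star_apply, smul_eq_mul, RCLike.star_def]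
  exact Finset.sum_congr rfl fun j _ => by ring

lemma sum_mulVec' {ι : Type*} (s : Finset ι) (M : ι → Matrix (Fin n) (Fin n) ℂ) (v : Fin n → ℂ) :
    (∑ i ∈ s, M i) *ᵥ v = ∑ i ∈ s, M i *ᵥ v := by
  ext j
  simp only [Matrix.mulVec, dotProduct, Finset.sum_apply, Matrix.sum_apply,
    Finset.sum_mul]
  rw [Finset.sum_comm]

lemma dotProduct_sum' {ι : Type*} (s : Finset ι) (w : Fin n → ℂ) (f : ι → Fin n → ℂ) :
    w ⬝ᵥ (∑ i ∈ s, f i) = ∑ i ∈ s, w ⬝ᵥ f i := by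
  simp only [dotProduct, Finset.sum_apply, Finset.mul_sum]
  rw [Finset.sum_comm]

lemma expand_quad {K : Matrix (Fin n) (Fin n) ℂ} (hK : K.PosSemidef) (μ : ℝ) (x y : Fin n → ℂ) :
    0 ≤ star y ⬝ᵥ (K *ᵥ y) + (μ : ℂ) * (star y ⬝ᵥ (K *ᵥ x)) + (μ : ℂ) * (star x ⬝ᵥ (K *ᵥ y))
      + (μ : ℂ) ^ 2 * (star x ⬝ᵥ (K *ᵥ x)) := by
  have h := hK.dotProduct_mulVec_nonneg (y + (μ : ℂ) • x)
  rw [star_add, star_smul, Matrix.mulVec_add, Matrix.mulVec_smul, add_dotProduct,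
    smul_dotProduct, dotProduct_add, dotProduct_add, dotProduct_smul, dotProduct_smul] at h
  simp only [smul_eq_mul, RCLike.star_def, Complex.conj_ofReal] at h
  convert h using 1
  ring

lemma quad_key (Φ : Matrix (Fin m) (Fin m) ℂ →ₗ[ℂ] Matrix (Fin n) (Fin n) ℂ)
    (hΦ : ∀ A : Matrix (Fin m) (Fin m) ℂ, A.PosDef → (Φ A).PosDef)
    (R : Matrix (Fin m) (Fin m) ℂ) (μ : Fin m → ℝ) (x y : Fin n → ℂ) :
    0 ≤ star y ⬝ᵥ (Φ (R * Rᴴ) *ᵥ y)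
      + star y ⬝ᵥ (Φ (R * diagonal (fun i => (μ i : ℂ)) * Rᴴ) *ᵥ x)
      + star x ⬝ᵥ (Φ (R * diagonal (fun i => (μ i : ℂ)) * Rᴴ) *ᵥ y)
      + star x ⬝ᵥ (Φ (R * diagonal (fun i => (μ i : ℂ) ^ 2) * Rᴴ) *ᵥ x) := by
  have h1 : R * Rᴴ = R * diagonal (fun _ => (1 : ℂ)) * Rᴴ := by
    rw [Matrix.diagonal_one, Matrix.mul_one]
  rw [h1, mul_diag_conjT, mul_diag_conjT, mul_diag_conjT]
  simp only [map_sum, LinearMap.map_smul, sum_mulVec', smul_mulVec,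
    dotProduct_sum', dotProduct_smul, smul_eq_mul, one_mul]
  rw [← Finset.sum_add_distrib, ← Finset.sum_add_distrib, ← Finset.sum_add_distrib]
  apply Finset.sum_nonneg
  intro i _
  have hK : (Φ (vecMulVec (fun k => R k i) (star fun k => R k i))).PosSemidef :=
    posMap_posSemidef Φ hΦ (vecMulVec_posSemidef _)
  have := expand_quad hK (μ i) x y
  convert this using 1

lemma star_mulVec_dotProduct (M : Matrix (Fin n) (Fin n) ℂ) (u w : Fin n → ℂ) :
    star (M *ᵥ u) ⬝ᵥ w = star u ⬝ᵥ (Mᴴ *ᵥ w) := by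
  rw [star_mulVec, dotProduct_mulVec]

set_option maxHeartbeats 1000000 in
lemma genChoi (Φ : Matrix (Fin m) (Fin m) ℂ →ₗ[ℂ] Matrix (Fin n) (Fin n) ℂ)
    (hΦ : ∀ A : Matrix (Fin m) (Fin m) ℂ, A.PosDef → (Φ A).PosDef)
    {W Z : Matrix (Fin m) (Fin m) ℂ} (hW : W.PosDef) (hZ : Z.PosDef) :
    (Φ (Z * W⁻¹ * Z) - Φ Z * (Φ W)⁻¹ * Φ Z).PosSemidef := by
  classical
  obtain ⟨T, hT, hTT⟩ : ∃ T : Matrix (Fin m) (Fin m) ℂ, T.PosSemidef ∧ T * T = W := by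
    open scoped MatrixOrder in
    exact ⟨CFC.sqrt W, (CFC.sqrt_nonneg W).posSemidef, CFC.sqrt_mul_sqrt_self W hW.posSemidef.nonneg⟩
  have hTher : Tᴴ = T := hT.isHermitian
  have hWdet : IsUnit W.det := (Matrix.isUnit_iff_isUnit_det W).mp hW.isUnit
  have hTdet : IsUnit T.det := by
    have h : T.det * T.det = W.det := by rw [← Matrix.det_mul, hTT]
    exact isUnit_of_mul_isUnit_left (h ▸ hWdet)
  have hTinv : T⁻¹ * T = 1 := Matrix.nonsing_inv_mul T hTdet
  have hTinv' : T * T⁻¹ = 1 := Matrix.mul_nonsing_inv T hTdet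
  have hTc1 : ∀ M : Matrix (Fin m) (Fin m) ℂ, T * (T⁻¹ * M) = M := fun M => by
    rw [← Matrix.mul_assoc, hTinv', Matrix.one_mul]
  have hTc2 : ∀ M : Matrix (Fin m) (Fin m) ℂ, T⁻¹ * (T * M) = M := fun M => by
    rw [← Matrix.mul_assoc, hTinv, Matrix.one_mul]
  set H := T⁻¹ * Z * T⁻¹ with hHdef
  have hH : H.IsHermitian := by
    show Hᴴ = H
    rw [hHdef, Matrix.conjTranspose_mul, Matrix.conjTranspose_mul,
      Matrix.conjTranspose_nonsing_inv, hTher, hZ.isHermitian.eq, Matrix.mul_assoc]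
  set V : Matrix (Fin m) (Fin m) ℂ := (Matrix.IsHermitian.eigenvectorUnitary hH :
      Matrix (Fin m) (Fin m) ℂ) with hVdef
  set μ := hH.eigenvalues with hμdef
  have spec : H = V * diagonal (fun i => (μ i : ℂ)) * star V := hH.spectral_theorem
  have hVV : V * star V = 1 :=
    (Matrix.mem_unitaryGroup_iff).mp (Matrix.IsHermitian.eigenvectorUnitary hH).2
  have hVV' : star V * V = 1 :=
    (Matrix.mem_unitaryGroup_iff').mp (Matrix.IsHermitian.eigenvectorUnitary hH).2
  have hVc : ∀ M : Matrix (Fin m) (Fin m) ℂ, V * (star V * M) = M := fun M => by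
    rw [← Matrix.mul_assoc, hVV, Matrix.one_mul]
  have hVc' : ∀ M : Matrix (Fin m) (Fin m) ℂ, star V * (V * M) = M := fun M => by
    rw [← Matrix.mul_assoc, hVV', Matrix.one_mul]
  set R := T * V with hRdef
  have hRH : Rᴴ = star V * T := by
    rw [hRdef, Matrix.conjTranspose_mul, hTher, Matrix.star_eq_conjTranspose]
  have hTHT : T * H * T = Z := by
    rw [hHdef]
    simp only [Matrix.mul_assoc, hTc1, hTc2, hTinv, Matrix.mul_one]
  have e1 : R * Rᴴ = W := by
    rw [hRH, hRdef, Matrix.mul_assoc, ← Matrix.mul_assoc V, hVV, Matrix.one_mul, hTT]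
  have e2 : R * diagonal (fun i => (μ i : ℂ)) * Rᴴ = Z := by
    rw [hRH, hRdef, ← hTHT, spec]
    simp only [Matrix.mul_assoc]
  have hW' : W⁻¹ = T⁻¹ * T⁻¹ := by rw [← hTT, Matrix.mul_inv_rev]
  have hd2 : (fun i => (μ i : ℂ) ^ 2) = fun i => (μ i : ℂ) * (μ i : ℂ) := by
    funext i; ring
  have e3 : R * diagonal (fun i => (μ i : ℂ) ^ 2) * Rᴴ = Z * W⁻¹ * Z := by
    rw [hRH, hRdef, ← hTHT, spec, hW', hd2, ← Matrix.diagonal_mul_diagonal]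
    simp only [Matrix.mul_assoc, hTc1, hTc2, hVc, hVc']
  have hFpd : (Φ W).PosDef := hΦ W hW
  have hGpd : (Φ Z).PosDef := hΦ Z hZ
  set F := Φ W with hFdef
  set G := Φ Z with hGdef
  have hFdet : IsUnit F.det := (Matrix.isUnit_iff_isUnit_det F).mp hFpd.isUnit
  have hFinv : F⁻¹ * F = 1 := Matrix.nonsing_inv_mul F hFdet
  have hFher : (F⁻¹)ᴴ = F⁻¹ := hFpd.inv.isHermitian
  have hGher : Gᴴ = G := hGpd.isHermitian
  have hZWZ : (Z * W⁻¹ * Z).PosSemidef := by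
    have h := (hW.inv.posSemidef).conjTranspose_mul_mul_same Z
    rwa [hZ.isHermitian.eq] at h
  refine Matrix.PosSemidef.of_dotProduct_mulVec_nonneg ?_ ?_
  · refine ((posMap_posSemidef Φ hΦ hZWZ).isHermitian).sub ?_
    show (G * F⁻¹ * G)ᴴ = G * F⁻¹ * G
    rw [Matrix.conjTranspose_mul, Matrix.conjTranspose_mul, hFher, hGher]
    rw [Matrix.mul_assoc]
  · intro x
    set A := F⁻¹ * G with hAdef
    set y := -(A *ᵥ x) with hydef
    have key := quad_key Φ hΦ R μ x y
    rw [e1, e2, e3] at key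
    have hAH : Aᴴ = G * F⁻¹ := by
      rw [hAdef, Matrix.conjTranspose_mul, hFher, hGher]
    have ht1 : star y ⬝ᵥ (F *ᵥ y) = star x ⬝ᵥ ((G * F⁻¹ * G) *ᵥ x) := by
      rw [hydef, star_neg, Matrix.mulVec_neg, dotProduct_neg, neg_dotProduct,
        neg_neg, Matrix.mulVec_mulVec, star_mulVec_dotProduct, Matrix.mulVec_mulVec, hAH]
      congr 1
      rw [hAdef]
      rw [← Matrix.mul_assoc, Matrix.mul_assoc (G * F⁻¹), ← Matrix.mul_assoc F,
        Matrix.mul_nonsing_inv _ hFdet, Matrix.one_mul]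
    have ht2 : star y ⬝ᵥ (G *ᵥ x) = -(star x ⬝ᵥ ((G * F⁻¹ * G) *ᵥ x)) := by
      rw [hydef, star_neg, neg_dotProduct, star_mulVec_dotProduct,
        Matrix.mulVec_mulVec, hAH, Matrix.mul_assoc]
    have ht3 : star x ⬝ᵥ (G *ᵥ y) = -(star x ⬝ᵥ ((G * F⁻¹ * G) *ᵥ x)) := by
      rw [hydef, Matrix.mulVec_neg, dotProduct_neg, Matrix.mulVec_mulVec, hAdef,
        ← Matrix.mul_assoc]
    rw [ht1, ht2, ht3] at key
    rw [Matrix.sub_mulVec, dotProduct_sub]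
    convert key using 1
    ring

lemma inv_sub_inv_posSemidef {A B : Matrix (Fin n) (Fin n) ℂ}
    (hA : A.PosDef) (hB : B.PosDef) (h : (B - A).PosSemidef) :
    (A⁻¹ - B⁻¹).PosSemidef := by
  have hAdet : IsUnit A.det := (Matrix.isUnit_iff_isUnit_det A).mp hA.isUnit
  have hBdet : IsUnit B.det := (Matrix.isUnit_iff_isUnit_det B).mp hB.isUnit
  have hc1 : ∀ M : Matrix (Fin n) (Fin n) ℂ, A⁻¹ * (A * M) = M := fun M => by
    rw [← Matrix.mul_assoc, Matrix.nonsing_inv_mul _ hAdet, Matrix.one_mul]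
  have hc2 : ∀ M : Matrix (Fin n) (Fin n) ℂ, B⁻¹ * (B * M) = M := fun M => by
    rw [← Matrix.mul_assoc, Matrix.nonsing_inv_mul _ hBdet, Matrix.one_mul]
  have hABH : (A⁻¹ - B⁻¹)ᴴ = A⁻¹ - B⁻¹ := by
    rw [Matrix.conjTranspose_sub, hA.inv.isHermitian.eq, hB.inv.isHermitian.eq]
  have key : A⁻¹ - B⁻¹ = (A⁻¹ - B⁻¹)ᴴ * A * (A⁻¹ - B⁻¹) + (B⁻¹)ᴴ * (B - A) * B⁻¹ := by
    rw [hABH, hB.inv.isHermitian.eq]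
    simp only [Matrix.sub_mul, Matrix.mul_sub, Matrix.mul_assoc, hc1, hc2,
      Matrix.mul_nonsing_inv _ hAdet, Matrix.mul_nonsing_inv _ hBdet, Matrix.mul_one]
    abel
  rw [key]
  exact ((hA.posSemidef).conjTranspose_mul_mul_same _).add (h.conjTranspose_mul_mul_same _)

set_option maxHeartbeats 1000000 in
/-- Strong (harmonic-mean) convexity of `X ↦ Φ((λ+X)⁻¹)` for a strictly positive
linear map `Φ`: `Φ((λ+(X+Y)/2)⁻¹) ≤ Φ((λ+X)⁻¹) ! Φ((λ+Y)⁻¹)`. -/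
theorem posMap_resolvent_strong_convex {m n : ℕ}
    (Φ : Matrix (Fin m) (Fin m) ℂ →ₗ[ℂ] Matrix (Fin n) (Fin n) ℂ)
    (hΦ : ∀ A : Matrix (Fin m) (Fin m) ℂ, A.PosDef → (Φ A).PosDef)
    (l : ℝ) (hl : 0 ≤ l)
    (X Y : Matrix (Fin m) (Fin m) ℂ) (hX : X.PosDef) (hY : Y.PosDef) :
    (((2 : ℂ)⁻¹ • ((Φ (((l : ℂ) • 1 + X)⁻¹))⁻¹ + (Φ (((l : ℂ) • 1 + Y)⁻¹))⁻¹))⁻¹ -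
      Φ (((l : ℂ) • 1 + (2 : ℂ)⁻¹ • (X + Y))⁻¹)).PosSemidef := by
  classical
  set C : Matrix (Fin m) (Fin m) ℂ := (l : ℂ) • 1 + X with hCdef
  set D : Matrix (Fin m) (Fin m) ℂ := (l : ℂ) • 1 + Y with hDdef
  have hC : C.PosDef := Matrix.PosDef.posSemidef_add (smul_one_posSemidef hl) hX
  have hD : D.PosDef := Matrix.PosDef.posSemidef_add (smul_one_posSemidef hl) hY
  have hCD : (C + D).PosDef := hC.add hD
  have hCDdet : IsUnit (C + D).det := (Matrix.isUnit_iff_isUnit_det _).mp hCD.isUnit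
  have hCdet : IsUnit C.det := (Matrix.isUnit_iff_isUnit_det _).mp hC.isUnit
  have hDdet : IsUnit D.det := (Matrix.isUnit_iff_isUnit_det _).mp hD.isUnit
  set X₀ : Matrix (Fin m) (Fin m) ℂ := (C + D)⁻¹ with hX₀def
  have hX₀ : X₀.PosDef := hCD.inv
  -- E
  have hEeq : (l : ℂ) • (1 : Matrix (Fin m) (Fin m) ℂ) + (2 : ℂ)⁻¹ • (X + Y)
      = (2 : ℂ)⁻¹ • (C + D) := by
    rw [hCdef, hDdef]
    module
  have hEinv : ((l : ℂ) • (1 : Matrix (Fin m) (Fin m) ℂ) + (2 : ℂ)⁻¹ • (X + Y))⁻¹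
      = (2 : ℂ) • X₀ := by
    apply Matrix.inv_eq_left_inv
    rw [hEeq, Matrix.smul_mul, Matrix.mul_smul, smul_smul, hX₀def,
      Matrix.nonsing_inv_mul _ hCDdet]
    norm_num
  set P := Φ C⁻¹ with hPdef
  set Q := Φ D⁻¹ with hQdef
  set M := Φ X₀ with hMdef
  have hP : P.PosDef := hΦ _ hC.inv
  have hQ : Q.PosDef := hΦ _ hD.inv
  have hM : M.PosDef := hΦ _ hX₀
  have hMdet : IsUnit M.det := (Matrix.isUnit_iff_isUnit_det _).mp hM.isUnit
  have G1 : (Φ (X₀ * C * X₀) - M * P⁻¹ * M).PosSemidef := by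
    have h := genChoi Φ hΦ hC.inv hX₀
    rwa [Matrix.nonsing_inv_nonsing_inv _ hCdet] at h
  have G2 : (Φ (X₀ * D * X₀) - M * Q⁻¹ * M).PosSemidef := by
    have h := genChoi Φ hΦ hD.inv hX₀
    rwa [Matrix.nonsing_inv_nonsing_inv _ hDdet] at h
  have hXCDX : X₀ * C * X₀ + X₀ * D * X₀ = X₀ := by
    rw [Matrix.mul_assoc, Matrix.mul_assoc, ← Matrix.mul_add, ← Matrix.add_mul, hX₀def,
      Matrix.mul_nonsing_inv _ hCDdet, Matrix.mul_one]
  have key1 : (M - M * (P⁻¹ + Q⁻¹) * M).PosSemidef := by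
    have hsum := G1.add G2
    have heq : Φ (X₀ * C * X₀) - M * P⁻¹ * M + (Φ (X₀ * D * X₀) - M * Q⁻¹ * M)
        = M - M * (P⁻¹ + Q⁻¹) * M := by
      have h2 : Φ (X₀ * C * X₀) + Φ (X₀ * D * X₀) = M := by
        rw [← map_add, hXCDX, hMdef]
      rw [Matrix.mul_add M P⁻¹ Q⁻¹, Matrix.add_mul (M * P⁻¹) (M * Q⁻¹) M, ← h2]
      abel
    rwa [heq] at hsum
  have key3 : (M⁻¹ - (P⁻¹ + Q⁻¹)).PosSemidef := by
    have h := key1.conjTranspose_mul_mul_same M⁻¹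
    have heq : (M⁻¹)ᴴ * (M - M * (P⁻¹ + Q⁻¹) * M) * M⁻¹ = M⁻¹ - (P⁻¹ + Q⁻¹) := by
      rw [hM.inv.isHermitian.eq, Matrix.mul_sub, Matrix.sub_mul]
      congr 1
      · rw [Matrix.mul_assoc, Matrix.mul_nonsing_inv _ hMdet, Matrix.mul_one]
      · rw [← Matrix.mul_assoc, ← Matrix.mul_assoc, Matrix.nonsing_inv_mul _ hMdet,
          Matrix.one_mul, Matrix.mul_assoc, Matrix.mul_nonsing_inv _ hMdet, Matrix.mul_one]
    rwa [heq] at h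
  set S := P⁻¹ + Q⁻¹ with hSdef
  have hS : S.PosDef := hP.inv.add hQ.inv
  have hSdet : IsUnit S.det := (Matrix.isUnit_iff_isUnit_det _).mp hS.isUnit
  have key4 : (S⁻¹ - M).PosSemidef := by
    have h := inv_sub_inv_posSemidef hS hM.inv key3
    rwa [Matrix.nonsing_inv_nonsing_inv _ hMdet] at h
  have hsmulinv : ((2 : ℂ)⁻¹ • S)⁻¹ = (2 : ℂ) • S⁻¹ := by
    apply Matrix.inv_eq_left_inv
    rw [Matrix.smul_mul, Matrix.mul_smul, smul_smul, Matrix.nonsing_inv_mul _ hSdet]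
    norm_num
  rw [hEinv, hsmulinv, LinearMap.map_smul, two_smul, two_smul]
  have heq : S⁻¹ + S⁻¹ - (M + M) = (S⁻¹ - M) + (S⁻¹ - M) := by abel
  rw [heq]
  exact key4.add key4
end

section
/- If Φ : Mₘ(ℂ) → Mₙ(ℂ) is a positive linear map and the block matrix [[X, Z],[Z, Y]] (with X, Y positive semidefinite and Z Hermitian) is positive semidefinite, then the block matrix [[Φ(X), Φ(Z)],[Φ(Z), Φ(Y)]] is positive semidefinite. -/
open Matrix ComplexOrder

namespace PosMapAux

open scoped MatrixOrder

lemma diagonal_eq_sum_std {k : ℕ} (v : Fin k → ℂ) :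
    Matrix.diagonal v = ∑ i, Matrix.single i i (v i) := by
  ext a b
  simp only [Matrix.sum_apply, Matrix.single, Matrix.diagonal_apply, Matrix.of_apply]
  by_cases h : a = b
  · subst h; simp [Finset.sum_ite_eq]
  · rw [if_neg h, Finset.sum_eq_zero]
    intro x _
    rw [if_neg]
    rintro ⟨rfl, rfl⟩
    exact h rfl

lemma conj_diag_decomp {k l : ℕ} (R : Matrix (Fin l) (Fin k) ℂ) (v : Fin k → ℂ) :
    R * Matrix.diagonal v * Rᴴ
      = ∑ i, v i • (R * Matrix.single i i (1 : ℂ) * Rᴴ) := by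
  rw [diagonal_eq_sum_std, Matrix.mul_sum, Matrix.sum_mul]
  refine Finset.sum_congr rfl fun i _ => ?_
  have h : Matrix.single i i (v i) = v i • Matrix.single i i (1 : ℂ) := by
    rw [Matrix.smul_single, smul_eq_mul, mul_one]
  rw [h, Matrix.mul_smul, Matrix.smul_mul]

lemma std_herm {k : ℕ} (i : Fin k) :
    (Matrix.single i i (1 : ℂ))ᴴ = Matrix.single i i (1 : ℂ) := by
  ext a b
  simp only [Matrix.conjTranspose_apply, Matrix.single, Matrix.of_apply]
  by_cases h1 : i = a <;> by_cases h2 : i = b <;> simp [h1, h2]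

lemma rank_piece_psd {k l : ℕ} (R : Matrix (Fin l) (Fin k) ℂ) (i : Fin k) :
    (R * Matrix.single i i (1 : ℂ) * Rᴴ).PosSemidef := by
  have h : R * Matrix.single i i (1 : ℂ) * Rᴴ
      = (R * Matrix.single i i (1 : ℂ)) * (R * Matrix.single i i (1 : ℂ))ᴴ := by
    rw [Matrix.conjTranspose_mul, std_herm, Matrix.mul_assoc, Matrix.mul_assoc,
      ← Matrix.mul_assoc (Matrix.single i i (1 : ℂ)),
      Matrix.single_mul_single_same, mul_one]
  rw [h]
  exact Matrix.posSemidef_self_mul_conjTranspose _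

lemma piece_psd {k : ℕ} {S : Matrix (Fin k) (Fin k) ℂ} (hS : S.PosSemidef) (c : ℝ) :
    (Matrix.fromBlocks S ((c : ℂ) • S) ((c : ℂ) • S) (((c : ℂ) * (c : ℂ)) • S)).PosSemidef := by
  obtain ⟨B, hB⟩ : ∃ B : Matrix (Fin k) (Fin k) ℂ, S = Bᴴ * B := ⟨CFC.sqrt S, by
    rw [(CFC.sqrt_nonneg S).posSemidef.isHermitian.eq, CFC.sqrt_mul_sqrt_self S hS.nonneg]⟩
  have key : Matrix.fromBlocks S ((c : ℂ) • S) ((c : ℂ) • S) (((c : ℂ) * (c : ℂ)) • S)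
      = (Matrix.fromBlocks B ((c : ℂ) • B) 0 0)ᴴ * (Matrix.fromBlocks B ((c : ℂ) • B) 0 0) := by
    rw [Matrix.fromBlocks_conjTranspose, Matrix.fromBlocks_multiply]
    simp [Matrix.conjTranspose_smul, Complex.star_def, Complex.conj_ofReal,
      Matrix.smul_mul, Matrix.mul_smul, smul_smul, ← hB]
    norm_cast
  rw [key]
  exact Matrix.posSemidef_conjTranspose_mul_self _

lemma corner11_psd {k l : ℕ} {A : Matrix (Fin k) (Fin k) ℂ} (hA : A.PosSemidef) :
    (Matrix.fromBlocks A 0 0 (0 : Matrix (Fin l) (Fin l) ℂ)).PosSemidef := by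
  obtain ⟨B, hB⟩ : ∃ B : Matrix (Fin k) (Fin k) ℂ, A = Bᴴ * B := ⟨CFC.sqrt A, by
    rw [(CFC.sqrt_nonneg A).posSemidef.isHermitian.eq, CFC.sqrt_mul_sqrt_self A hA.nonneg]⟩
  have key : Matrix.fromBlocks A 0 0 (0 : Matrix (Fin l) (Fin l) ℂ)
      = (Matrix.fromBlocks B 0 0 0)ᴴ * (Matrix.fromBlocks B 0 0 0) := by
    rw [Matrix.fromBlocks_conjTranspose, Matrix.fromBlocks_multiply]
    simp [← hB]
  rw [key]
  exact Matrix.posSemidef_conjTranspose_mul_self _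

lemma corner22_psd {k l : ℕ} {A : Matrix (Fin l) (Fin l) ℂ} (hA : A.PosSemidef) :
    (Matrix.fromBlocks (0 : Matrix (Fin k) (Fin k) ℂ) 0 0 A).PosSemidef := by
  obtain ⟨B, hB⟩ : ∃ B : Matrix (Fin l) (Fin l) ℂ, A = Bᴴ * B := ⟨CFC.sqrt A, by
    rw [(CFC.sqrt_nonneg A).posSemidef.isHermitian.eq, CFC.sqrt_mul_sqrt_self A hA.nonneg]⟩
  have key : Matrix.fromBlocks (0 : Matrix (Fin k) (Fin k) ℂ) 0 0 A
      = (Matrix.fromBlocks 0 0 0 B)ᴴ * (Matrix.fromBlocks 0 0 0 B) := by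
    rw [Matrix.fromBlocks_conjTranspose, Matrix.fromBlocks_multiply]
    simp [← hB]
  rw [key]
  exact Matrix.posSemidef_conjTranspose_mul_self _

lemma fromBlocks_sum {k : ℕ} {ι : Type*} (s : Finset ι)
    (A B C D : ι → Matrix (Fin k) (Fin k) ℂ) :
    Matrix.fromBlocks (∑ i ∈ s, A i) (∑ i ∈ s, B i) (∑ i ∈ s, C i) (∑ i ∈ s, D i)
      = ∑ i ∈ s, Matrix.fromBlocks (A i) (B i) (C i) (D i) := by
  ext (a | a) (b | b) <;> simp [Matrix.sum_apply]

/-- The main lemma in the case where `X` is positive definite. -/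
lemma main_posdef {m n : ℕ}
    (Φ : Matrix (Fin m) (Fin m) ℂ →ₗ[ℂ] Matrix (Fin n) (Fin n) ℂ)
    (hΦ : ∀ A : Matrix (Fin m) (Fin m) ℂ, A.PosSemidef → (Φ A).PosSemidef)
    (X Y Z : Matrix (Fin m) (Fin m) ℂ)
    (hX : X.PosDef) (hZ : Z.IsHermitian)
    (hblock : (Matrix.fromBlocks X Z Z Y).PosSemidef) :
    (Matrix.fromBlocks (Φ X) (Φ Z) (Φ Z) (Φ Y)).PosSemidef := by
  haveI := hX.isUnit.invertible
  have hSchur : (Y - Zᴴ * X⁻¹ * Z).PosSemidef := by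
    refine (Matrix.PosDef.fromBlocks₁₁ Z Y hX).mp ?_
    rw [hZ.eq]; exact hblock
  -- square root of X
  set S : Matrix (Fin m) (Fin m) ℂ := CFC.sqrt X with hSdef
  have hSps : S.PosSemidef := (CFC.sqrt_nonneg X).posSemidef
  have hSH : Sᴴ = S := hSps.isHermitian.eq
  have hSS : S * S = X := CFC.sqrt_mul_sqrt_self X hX.posSemidef.nonneg
  have hSdet : IsUnit S.det := by
    have h1 : S.det * S.det = X.det := by rw [← Matrix.det_mul, hSS]
    have h2 : IsUnit X.det := (Matrix.isUnit_iff_isUnit_det X).mp hX.isUnit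
    exact isUnit_of_mul_isUnit_left (h1 ▸ h2)
  have hS1 : S * S⁻¹ = 1 := Matrix.mul_nonsing_inv S hSdet
  have hS2 : S⁻¹ * S = 1 := Matrix.nonsing_inv_mul S hSdet
  have hSinvH : (S⁻¹)ᴴ = S⁻¹ := by rw [Matrix.conjTranspose_nonsing_inv, hSH]
  -- W := S⁻¹ Z S⁻¹ is Hermitian; spectral-decompose it
  have hW : (S⁻¹ * Z * S⁻¹).IsHermitian := by
    unfold Matrix.IsHermitian
    rw [Matrix.conjTranspose_mul, Matrix.conjTranspose_mul, hSinvH, hZ.eq, Matrix.mul_assoc]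
  set W : Matrix (Fin m) (Fin m) ℂ := S⁻¹ * Z * S⁻¹ with hWdef
  set U : Matrix (Fin m) (Fin m) ℂ := (hW.eigenvectorUnitary : Matrix (Fin m) (Fin m) ℂ)
    with hUdef
  set d : Fin m → ℝ := hW.eigenvalues with hddef
  set D : Matrix (Fin m) (Fin m) ℂ := Matrix.diagonal (fun i => (d i : ℂ)) with hDdef
  have hspec : W = U * D * star U := hW.spectral_theorem
  have hU1 : U * star U = 1 := (Matrix.mem_unitaryGroup_iff).mp hW.eigenvectorUnitary.2
  have hU2 : star U * U = 1 := (Matrix.mem_unitaryGroup_iff').mp hW.eigenvectorUnitary.2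
  set R : Matrix (Fin m) (Fin m) ℂ := S * U with hRdef
  have hRH : Rᴴ = star U * S := by
    rw [hRdef, Matrix.conjTranspose_mul, hSH, Matrix.star_eq_conjTranspose]
  have hXR : X = R * Rᴴ := by
    rw [hRH, hRdef, Matrix.mul_assoc, ← Matrix.mul_assoc U, hU1, Matrix.one_mul, hSS]
  have hSWS : S * W * S = Z := by
    rw [hWdef, Matrix.mul_assoc, Matrix.mul_assoc, hS2, Matrix.mul_one, ← Matrix.mul_assoc,
      hS1, Matrix.one_mul]
  have hZR : Z = R * D * Rᴴ := by
    calc Z = S * W * S := hSWS.symm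
    _ = S * (U * D * star U) * S := by rw [← hspec]
    _ = R * D * Rᴴ := by rw [hRH, hRdef]; simp only [Matrix.mul_assoc]
  have hD2 : Matrix.diagonal (fun i => ((d i : ℂ) * (d i : ℂ))) = D * D := by
    rw [hDdef, Matrix.diagonal_mul_diagonal]
  have hXinv : X⁻¹ = S⁻¹ * S⁻¹ := by rw [← hSS, Matrix.mul_inv_rev]
  have hkey : U * D * star U * (U * D * star U) = U * (D * D) * star U := by
    have h1 : U * D * star U * (U * D * star U) = U * D * (star U * U) * (D * star U) := by
      simp only [Matrix.mul_assoc]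
    rw [h1, hU2, Matrix.mul_one]
    simp only [Matrix.mul_assoc]
  have hWW : R * Matrix.diagonal (fun i => ((d i : ℂ) * (d i : ℂ))) * Rᴴ = Zᴴ * X⁻¹ * Z := by
    have e1 : R * Matrix.diagonal (fun i => ((d i : ℂ) * (d i : ℂ))) * Rᴴ
        = S * (W * W) * S := by
      rw [hD2, hRH, hRdef]
      calc S * U * (D * D) * (star U * S)
          = S * (U * (D * D) * star U) * S := by simp only [Matrix.mul_assoc]
        _ = S * (U * D * star U * (U * D * star U)) * S := by rw [hkey]
        _ = S * (W * W) * S := by rw [← hspec]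
    have e2 : S * (W * W) * S = Z * X⁻¹ * Z := by
      rw [hWdef, hXinv]
      have h3 : S * (S⁻¹ * Z * S⁻¹ * (S⁻¹ * Z * S⁻¹)) * S
          = (S * S⁻¹) * (Z * ((S⁻¹ * S⁻¹) * (Z * (S⁻¹ * S)))) := by
        simp only [Matrix.mul_assoc]
      rw [h3, hS1, hS2, Matrix.one_mul, Matrix.mul_one]
      simp only [Matrix.mul_assoc]
    rw [e1, e2, hZ.eq]
  have hYR : Y = R * Matrix.diagonal (fun i => ((d i : ℂ) * (d i : ℂ))) * Rᴴ
      + (Y - Zᴴ * X⁻¹ * Z) := by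
    rw [hWW]; abel
  -- now decompose everything into rank pieces
  have hXe : Φ X = ∑ i, Φ (R * Matrix.single i i (1 : ℂ) * Rᴴ) := by
    have h : X = R * Matrix.diagonal (fun _ : Fin m => (1 : ℂ)) * Rᴴ := by
      rw [Matrix.diagonal_one, Matrix.mul_one, hXR]
    rw [h, conj_diag_decomp, map_sum]
    simp only [one_smul]
  have hZe : Φ Z = ∑ i, (d i : ℂ) • Φ (R * Matrix.single i i (1 : ℂ) * Rᴴ) := by
    rw [hZR, hDdef, conj_diag_decomp, map_sum]
    simp only [_root_.map_smul]
  have hYe : Φ Y = (∑ i, ((d i : ℂ) * (d i : ℂ)) •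
        Φ (R * Matrix.single i i (1 : ℂ) * Rᴴ))
      + Φ (Y - Zᴴ * X⁻¹ * Z) := by
    conv_lhs => rw [hYR]
    rw [map_add, conj_diag_decomp, map_sum]
    simp only [_root_.map_smul]
  rw [hXe, hZe, hYe]
  have hsplit : Matrix.fromBlocks
      (∑ i, Φ (R * Matrix.single i i (1 : ℂ) * Rᴴ))
      (∑ i, (d i : ℂ) • Φ (R * Matrix.single i i (1 : ℂ) * Rᴴ))
      (∑ i, (d i : ℂ) • Φ (R * Matrix.single i i (1 : ℂ) * Rᴴ))
      ((∑ i, ((d i : ℂ) * (d i : ℂ)) • Φ (R * Matrix.single i i (1 : ℂ) * Rᴴ))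
        + Φ (Y - Zᴴ * X⁻¹ * Z))
      = (∑ i, Matrix.fromBlocks
          (Φ (R * Matrix.single i i (1 : ℂ) * Rᴴ))
          ((d i : ℂ) • Φ (R * Matrix.single i i (1 : ℂ) * Rᴴ))
          ((d i : ℂ) • Φ (R * Matrix.single i i (1 : ℂ) * Rᴴ))
          (((d i : ℂ) * (d i : ℂ)) • Φ (R * Matrix.single i i (1 : ℂ) * Rᴴ)))
        + Matrix.fromBlocks 0 0 0 (Φ (Y - Zᴴ * X⁻¹ * Z)) := by
    rw [← fromBlocks_sum, Matrix.fromBlocks_add]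
    simp
  rw [hsplit]
  refine Matrix.PosSemidef.add ?_ (corner22_psd (hΦ _ hSchur))
  refine Finset.sum_induction _ _ (fun a b ha hb => ha.add hb) Matrix.PosSemidef.zero ?_
  intro i _
  exact piece_psd (hΦ _ (rank_piece_psd R i)) (d i)

lemma lim_aux {a b : ℂ} (hb : 0 ≤ b) (h : ∀ ε : ℝ, 0 < ε → 0 ≤ a + (ε : ℂ) * b) : 0 ≤ a := by
  rw [Complex.le_def] at hb ⊢
  simp only [Complex.zero_re, Complex.zero_im] at hb ⊢
  obtain ⟨hbre, hbim⟩ := hb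
  have h1 := h 1 one_pos
  rw [Complex.le_def] at h1
  simp only [Complex.zero_re, Complex.zero_im, Complex.add_re, Complex.add_im, Complex.mul_re,
    Complex.mul_im, Complex.ofReal_re, Complex.ofReal_im, one_mul, zero_mul, sub_zero,
    add_zero, zero_add] at h1
  constructor
  · by_contra hlt
    push_neg at hlt
    set ε : ℝ := -a.re / (b.re + 1) with hε
    have hd : (0 : ℝ) < b.re + 1 := by linarith
    have hεpos : 0 < ε := div_pos (by linarith) hd
    have h2 := h ε hεpos
    rw [Complex.le_def] at h2
    simp only [Complex.zero_re, Complex.zero_im, Complex.add_re, Complex.add_im, Complex.mul_re,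
      Complex.mul_im, Complex.ofReal_re, Complex.ofReal_im, zero_mul, sub_zero,
      add_zero, zero_add] at h2
    obtain ⟨h2re, -⟩ := h2
    have hmul : ε * b.re * (b.re + 1) = -a.re * b.re := by
      rw [hε]; field_simp
    nlinarith [mul_nonneg h2re (le_of_lt hd)]
  · linarith [h1.2, hbim]

end PosMapAux

/-- Restricted 2-positivity: a positive linear map preserves positive
semidefiniteness of symmetric block matrices `[[X, Z], [Z, Y]]`. -/
theorem posMap_fromBlocks {m n : ℕ}
    (Φ : Matrix (Fin m) (Fin m) ℂ →ₗ[ℂ] Matrix (Fin n) (Fin n) ℂ)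
    (hΦ : ∀ A : Matrix (Fin m) (Fin m) ℂ, A.PosSemidef → (Φ A).PosSemidef)
    (X Y Z : Matrix (Fin m) (Fin m) ℂ)
    (hX : X.PosSemidef) (hY : Y.PosSemidef) (hZ : Z.IsHermitian)
    (hblock : (Matrix.fromBlocks X Z Z Y).PosSemidef) :
    (Matrix.fromBlocks (Φ X) (Φ Z) (Φ Z) (Φ Y)).PosSemidef := by
  classical
  set G : Matrix (Fin n ⊕ Fin n) (Fin n ⊕ Fin n) ℂ :=
    Matrix.fromBlocks (Φ X) (Φ Z) (Φ Z) (Φ Y) with hGdef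
  set P : Matrix (Fin n ⊕ Fin n) (Fin n ⊕ Fin n) ℂ :=
    Matrix.fromBlocks (Φ 1) 0 0 0 with hPdef
  have hP : P.PosSemidef := PosMapAux.corner11_psd (hΦ 1 Matrix.PosSemidef.one)
  have hsm1 : ∀ ε : ℝ, ((ε : ℂ) • (1 : Matrix (Fin m) (Fin m) ℂ))
      = Matrix.diagonal (fun _ => (ε : ℂ)) := by
    intro ε
    ext i j
    by_cases h : i = j <;>
      simp [Matrix.smul_apply, Matrix.one_apply, Matrix.diagonal_apply, h]
  have key : ∀ ε : ℝ, 0 < ε → (G + (ε : ℂ) • P).PosSemidef := by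
    intro ε hε
    have hone : ((ε : ℂ) • (1 : Matrix (Fin m) (Fin m) ℂ)).PosDef := by
      rw [hsm1]
      exact Matrix.posDef_diagonal_iff.mpr fun _ => Complex.zero_lt_real.mpr hε
    have hXε : (X + (ε : ℂ) • 1).PosDef := Matrix.PosDef.posSemidef_add hX hone
    have hblockε : (Matrix.fromBlocks (X + (ε : ℂ) • 1) Z Z Y).PosSemidef := by
      have h0 : (Matrix.fromBlocks ((ε : ℂ) • (1 : Matrix (Fin m) (Fin m) ℂ)) 0 0
          (0 : Matrix (Fin m) (Fin m) ℂ)).PosSemidef :=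
        PosMapAux.corner11_psd hone.posSemidef
      have heq : Matrix.fromBlocks X Z Z Y
          + Matrix.fromBlocks ((ε : ℂ) • (1 : Matrix (Fin m) (Fin m) ℂ)) 0 0 0
          = Matrix.fromBlocks (X + (ε : ℂ) • 1) Z Z Y := by
        rw [Matrix.fromBlocks_add]; simp
      exact heq ▸ hblock.add h0
    have hmain := PosMapAux.main_posdef Φ hΦ (X + (ε : ℂ) • 1) Y Z hXε hZ hblockε
    have heq2 : Matrix.fromBlocks (Φ (X + (ε : ℂ) • 1)) (Φ Z) (Φ Z) (Φ Y)
        = G + (ε : ℂ) • P := by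
      rw [hGdef, hPdef, Matrix.fromBlocks_smul, Matrix.fromBlocks_add, map_add,
        _root_.map_smul]
      simp
    exact heq2 ▸ hmain
  refine Matrix.posSemidef_iff_dotProduct_mulVec.mpr ⟨?_, ?_⟩
  · have h1 := (key 1 one_pos).isHermitian
    have hGeq : G = (G + ((1 : ℝ) : ℂ) • P) - P := by simp
    rw [hGeq]
    exact h1.sub hP.isHermitian
  · intro x
    have hq : ∀ ε : ℝ, 0 < ε →
        0 ≤ (dotProduct (star x) (G *ᵥ x))
          + (ε : ℂ) * (dotProduct (star x) (P *ᵥ x)) := by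
      intro ε hε
      have h3 := (key ε hε).dotProduct_mulVec_nonneg x
      rwa [Matrix.add_mulVec, Matrix.smul_mulVec, dotProduct_add,
        dotProduct_smul, smul_eq_mul] at h3
    exact PosMapAux.lim_aux (hP.dotProduct_mulVec_nonneg x) hq
end
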